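/- The chain (B_n) is almost surely absorbed by the set of constant maps in finite time, i.e. T = inf{n ≥ 0 : B_n is constant} is almost surely finite; moreover the absorbed value is uniformly distributed: for every i ∈ {1,…,N}, the probability that B_T is the constant map with value i equals 1/N. -/

import Mathlib

open MeasureTheory

def IsConstMap {N : ℕ} (b : Fin N → Fin N) : Prop := ∃ i, ∀ j, b j = i

namespace Absorb

noncomputable instance {N : ℕ} (b : Fin N → Fin N) : Decidable (IsConstMap b) :=
  Classical.dec _

variable {N : ℕ}

def comp (a : ℕ → (Fin N → Fin N)) : ℕ → (Fin N → Fin N)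
  | 0 => a 0
  | n + 1 => a (n + 1) ∘ comp a n

lemma comp_congr {a b : ℕ → (Fin N → Fin N)} :
    ∀ n, (∀ p, p ≤ n → a p = b p) → comp a n = comp b n
  | 0, h => h 0 le_rfl
  | n + 1, h => by
      simp only [comp, h (n + 1) le_rfl,
        comp_congr n (fun p hp => h p (hp.trans n.le_succ))]

lemma comp_post {a b : ℕ → (Fin N → Fin N)} (σ : Fin N → Fin N) :
    ∀ n, (∀ p, p < n → a p = b p) → b n = σ ∘ a n → comp b n = σ ∘ comp a n
  | 0, _, h2 => h2
  | n + 1, h1, h2 => by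
      have h3 : comp b n = comp a n :=
        (comp_congr n (fun p hp => (h1 p (Nat.lt_succ_of_le hp)))).symm
      simp only [comp, h2, h3, Function.comp_assoc]

lemma isConstMap_comp {a : ℕ → (Fin N → Fin N)} {n : ℕ} (h : IsConstMap (a n)) :
    IsConstMap (comp a n) := by
  obtain ⟨i, hi⟩ := h
  cases n with
  | zero => exact ⟨i, hi⟩
  | succ n => exact ⟨i, fun j => hi _⟩

def ext (K : ℕ) (v : Fin (K + 1) → (Fin N → Fin N)) (p : ℕ) : Fin N → Fin N :=
  if h : p < K + 1 then v ⟨p, h⟩ else v ⟨0, Nat.succ_pos K⟩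

lemma ext_lt {K : ℕ} {v : Fin (K + 1) → (Fin N → Fin N)} {p : ℕ} (h : p < K + 1) :
    ext K v p = v ⟨p, h⟩ := dif_pos h

/-- Tuples whose composed chain is non-constant before time `n` and constant `i` at time `n`. -/
noncomputable def TS (K n : ℕ) (i : Fin N) : Finset (Fin (K + 1) → (Fin N → Fin N)) :=
  Finset.univ.filter fun v =>
    (∀ m < n, ¬ IsConstMap (comp (ext K v) m)) ∧ ∀ j, comp (ext K v) n j = i

lemma mem_TS {K n : ℕ} {i : Fin N} {v : Fin (K + 1) → (Fin N → Fin N)} :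
    v ∈ TS K n i ↔
      (∀ m < n, ¬ IsConstMap (comp (ext K v) m)) ∧ ∀ j, comp (ext K v) n j = i := by
  simp [TS]

lemma TS_card_eq (hN : 1 ≤ N) {K n : ℕ} (hn : n ≤ K) (i i' : Fin N) :
    (TS K n i).card = (TS K n i').card := by
  set σ : Fin N → Fin N := ⇑(Equiv.swap i i')
  set g : (Fin (K + 1) → (Fin N → Fin N)) → (Fin (K + 1) → (Fin N → Fin N)) :=
    fun v => Function.update v ⟨n, Nat.lt_succ_of_le hn⟩ (σ ∘ v ⟨n, Nat.lt_succ_of_le hn⟩)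
  have hgmem : ∀ (j j' : Fin N) (v : Fin (K + 1) → (Fin N → Fin N)),
      σ j = j' → v ∈ TS K n j → g v ∈ TS K n j' := by
    intro j j' v hσ hv
    rw [mem_TS] at hv ⊢
    have hlt : ∀ p, p < n → ext K (g v) p = ext K v p := by
      intro p hp
      have hpK : p < K + 1 := lt_of_lt_of_le hp (Nat.le_succ_of_le hn)
      rw [ext_lt hpK, ext_lt hpK]
      simp only [g]
      rw [Function.update_of_ne]
      intro hpe
      exact absurd (Fin.mk.injEq .. ▸ hpe) (by simpa using hp.ne)
    have hcm : ∀ m, m < n → comp (ext K (g v)) m = comp (ext K v) m := by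
      intro m hm
      exact (comp_congr m (fun p hp => (hlt p (lt_of_le_of_lt hp hm)).symm)).symm
    have hn' : comp (ext K (g v)) n = σ ∘ comp (ext K v) n := by
      refine comp_post σ n (fun p hp => (hlt p hp).symm) ?_
      rw [ext_lt (Nat.lt_succ_of_le hn), ext_lt (Nat.lt_succ_of_le hn)]
      simp [g]
    refine ⟨fun m hm => (hcm m hm) ▸ hv.1 m hm, fun x => ?_⟩
    rw [hn']
    simp only [Function.comp_apply, hv.2 x, hσ]
  have hgg : ∀ v, g (g v) = v := by
    intro v
    simp only [g, Function.update_self]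
    rw [Function.update_idem]
    have : σ ∘ σ ∘ v ⟨n, Nat.lt_succ_of_le hn⟩ = v ⟨n, Nat.lt_succ_of_le hn⟩ := by
      ext x
      simp [σ, Equiv.swap_apply_self]
    rw [this]
    exact Function.update_eq_self _ _
  refine Finset.card_bij' (fun v _ => g v) (fun v _ => g v) ?_ ?_ ?_ ?_
  · intro v hv; exact hgmem i i' v (Equiv.swap_apply_left i i') hv
  · intro v hv; exact hgmem i' i v (Equiv.swap_apply_right i i') hv
  · intro v _; exact hgg v
  · intro v _; exact hgg v

lemma TS_disjoint (hN : 1 ≤ N) {K : ℕ} {n n' : ℕ} {i i' : Fin N}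
    (h : (n, i) ≠ (n', i')) : Disjoint (TS K n i) (TS K n' i') := by
  rw [Finset.disjoint_left]
  intro v hv hv'
  rw [mem_TS] at hv hv'
  rcases Nat.lt_trichotomy n n' with hlt | heq | hgt
  · exact hv'.1 n hlt ⟨i, hv.2⟩
  · subst heq
    have h1 := hv.2 ⟨0, hN⟩
    have h2 := hv'.2 ⟨0, hN⟩
    exact h (by rw [← h1, h2])
  · exact hv.1 n' hgt ⟨i', hv'.2⟩


lemma card_const (hN : 1 ≤ N) :
    (Finset.univ.filter fun f : Fin N → Fin N => IsConstMap f).card = N := by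
  have : (Finset.univ.filter fun f : Fin N → Fin N => IsConstMap f)
      = Finset.univ.image (fun i : Fin N => Function.const (Fin N) i) := by
    ext f
    simp only [Finset.mem_filter, Finset.mem_univ, true_and, Finset.mem_image]
    constructor
    · rintro ⟨i, hi⟩; exact ⟨i, by ext j; simp [hi j]⟩
    · rintro ⟨i, rfl⟩; exact ⟨i, fun j => rfl⟩
  rw [this, Finset.card_image_of_injective _ ?_, Finset.card_univ, Fintype.card_fin]
  intro x y hxy
  exact congrFun hxy ⟨0, hN⟩

lemma card_nonconst (hN : 1 ≤ N) :
    (Finset.univ.filter fun f : Fin N → Fin N => ¬ IsConstMap f).card = N ^ N - N := by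
  have h := Finset.card_filter_add_card_filter_not
    (s := (Finset.univ : Finset (Fin N → Fin N))) (p := fun f => IsConstMap f)
  rw [card_const hN, Finset.card_univ] at h
  simp only [Fintype.card_fun, Fintype.card_fin] at h
  omega

lemma card_nonconst_lt (hN : 1 ≤ N) : N ^ N - N < N ^ N := by
  have : 0 < N ^ N := Nat.pow_pos hN
  omega

lemma card_pi_nonconst (hN : 1 ≤ N) (K : ℕ) :
    (Finset.univ.filter fun v : Fin (K + 1) → (Fin N → Fin N) =>
      ∀ m, ¬ IsConstMap (v m)).card = (N ^ N - N) ^ (K + 1) := by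
  classical
  rw [← Fintype.card_subtype]
  rw [Fintype.card_congr (Equiv.subtypePiEquivPi (p := fun _ (f : Fin N → Fin N) => ¬ IsConstMap f))]
  rw [Fintype.card_pi]
  simp only [Fintype.card_subtype, card_nonconst hN]
  simp

/-- The never-constant tuple set. -/
noncomputable def TS' (K : ℕ) : Finset (Fin (K + 1) → (Fin N → Fin N)) :=
  Finset.univ.filter fun v => ∀ m < K + 1, ¬ IsConstMap (comp (ext K v) m)

lemma TS'_card_le (hN : 1 ≤ N) (K : ℕ) : (TS' (N := N) K).card ≤ (N ^ N - N) ^ (K + 1) := by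
  rw [← card_pi_nonconst hN K]
  apply Finset.card_le_card
  intro v hv
  simp only [TS', Finset.mem_filter, Finset.mem_univ, true_and] at hv ⊢
  intro m hm
  apply hv m m.isLt
  apply isConstMap_comp
  rwa [ext_lt m.isLt, Fin.eta]

lemma TS_card_sum_le (hN : 1 ≤ N) (K : ℕ) :
    ∑ p ∈ (Finset.range (K + 1)) ×ˢ (Finset.univ : Finset (Fin N)),
      (TS K p.1 p.2).card ≤ (N ^ N) ^ (K + 1) := by
  classical
  rw [← Finset.card_biUnion]
  · calc _ ≤ Fintype.card (Fin (K + 1) → (Fin N → Fin N)) := Finset.card_le_univ _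
      _ = (N ^ N) ^ (K + 1) := by simp [Fintype.card_fun]
  · intro p _ q _ hpq
    exact TS_disjoint hN (by simpa [Prod.ext_iff] using hpq)

end Absorb


open MeasureTheory Absorb

/-- The chain `(B_n)` of composed i.i.d. uniform random maps on `{1,…,N}` is almost surely
absorbed by the set of constant maps in finite time, and the absorbed value `B_T` (taken at the
first time `T` at which `B` is constant) is uniformly distributed: for every `i`, the probability
that `B_T` is the constant map with value `i` equals `1/N`. -/
theorem absorption_and_uniform_entrance
    (N : ℕ) (hN : 1 ≤ N)
    {Ω : Type*} [MeasurableSpace Ω] (P : Measure Ω) [IsProbabilityMeasure P]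
    (A B : ℕ → Ω → (Fin N → Fin N))
    -- each `A p` is uniformly distributed on the set `𝒜` of maps, which has `N ^ N` elements
    (hunif : ∀ (p : ℕ) (a : Fin N → Fin N), P {ω | A p ω = a} = ((N : ENNReal) ^ N)⁻¹)
    -- the maps `(A p)` are independent
    (hindep : ∀ (s : Finset ℕ) (a : ℕ → (Fin N → Fin N)),
      P {ω | ∀ p ∈ s, A p ω = a p} = ∏ p ∈ s, P {ω | A p ω = a p})
    -- `B 0 = A 0` and `B (n+1) = A (n+1) ∘ B n`
    (hB0 : ∀ ω, B 0 ω = A 0 ω)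
    (hBs : ∀ n ω, B (n + 1) ω = A (n + 1) ω ∘ B n ω) :
    P {ω | ∃ n, IsConstMap (B n ω)} = 1 ∧
    ∀ i : Fin N,
      P {ω | ∃ n, (∀ m < n, ¬ IsConstMap (B m ω)) ∧ ∀ j, B n ω j = i} = (N : ENNReal)⁻¹ := by
  classical
  set q : ENNReal := ((N : ENNReal) ^ N)⁻¹ with hqdef
  have hNcast : ((N : ENNReal)) ≠ 0 := by
    simp only [ne_eq, Nat.cast_eq_zero]; omega
  have hNtop : ((N : ENNReal)) ≠ ⊤ := ENNReal.natCast_ne_top N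
  have hpow_ne : ((N : ENNReal) ^ N) ≠ 0 := pow_ne_zero _ hNcast
  have hpow_top : ((N : ENNReal) ^ N) ≠ ⊤ := by
    exact ENNReal.pow_ne_top hNtop
  have hq_ne : q ≠ 0 := by simp [hqdef, hpow_top]
  have hq_top : q ≠ ⊤ := by simp [hqdef, hpow_ne]
  -- the chain is the composition of the `A`'s
  have hB : ∀ n ω, B n ω = Absorb.comp (fun p => A p ω) n := by
    intro n
    induction n with
    | zero => intro ω; exact hB0 ω
    | succ n ih => intro ω; rw [hBs n ω, ih ω]; rfl
  have hBK : ∀ (K : ℕ) (ω : Ω) (m : ℕ), m ≤ K →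
      Absorb.comp (Absorb.ext K (fun p : Fin (K + 1) => A p ω)) m = B m ω := by
    intro K ω m hm
    rw [hB m ω]
    refine Absorb.comp_congr m (fun p hp => ?_)
    rw [Absorb.ext_lt (Nat.lt_succ_of_le (hp.trans hm))]
  -- cylinder probabilities
  have hcyl : ∀ (K : ℕ) (v : Fin (K + 1) → (Fin N → Fin N)),
      P {ω | ∀ p : Fin (K + 1), A p ω = v p} = q ^ (K + 1) := by
    intro K v
    have hset : {ω | ∀ p : Fin (K + 1), A p ω = v p}
        = {ω | ∀ p ∈ Finset.range (K + 1), A p ω = Absorb.ext K v p} := by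
      ext ω
      simp only [Set.mem_setOf_eq, Finset.mem_range]
      constructor
      · intro h p hp; rw [Absorb.ext_lt hp]; exact h ⟨p, hp⟩
      · intro h p
        have := h p p.isLt
        rwa [Absorb.ext_lt p.isLt, Fin.eta] at this
    rw [hset, hindep, Finset.prod_congr rfl (fun p _ => hunif p _), Finset.prod_const,
      Finset.card_range]
  -- covering bound
  have hcover : ∀ (K : ℕ) (S : Set Ω) (V : Finset (Fin (K + 1) → (Fin N → Fin N))),
      (∀ ω ∈ S, (fun p : Fin (K + 1) => A p ω) ∈ V) →
      P S ≤ V.card * q ^ (K + 1) := by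
    intro K S V hS
    have hsub : S ⊆ ⋃ v ∈ V, {ω | ∀ p : Fin (K + 1), A p ω = v p} := by
      intro ω hω
      exact Set.mem_biUnion (hS ω hω) (fun p => rfl)
    calc P S ≤ P (⋃ v ∈ V, {ω | ∀ p : Fin (K + 1), A p ω = v p}) := measure_mono hsub
      _ ≤ ∑ v ∈ V, P {ω | ∀ p : Fin (K + 1), A p ω = v p} := measure_biUnion_finset_le _ _
      _ = V.card * q ^ (K + 1) := by
          rw [Finset.sum_congr rfl (fun v _ => hcyl K v), Finset.sum_const, nsmul_eq_mul]
  -- Part 1: a.s. absorption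
  have hnev : P {ω | ∀ n, ¬ IsConstMap (B n ω)} = 0 := by
    set c : ENNReal := (↑(N ^ N - N)) * q with hcdef
    have hc1 : c < 1 := by
      have h1 : (1 : ENNReal) = (↑(N ^ N)) * q := by
        rw [hqdef]
        push_cast
        rw [ENNReal.mul_inv_cancel hpow_ne hpow_top]
      rw [hcdef, h1]
      rw [mul_comm _ q, mul_comm _ q]
      exact ENNReal.mul_lt_mul_right hq_ne hq_top (by exact_mod_cast Absorb.card_nonconst_lt hN)
    have hbound : ∀ K : ℕ, P {ω | ∀ n, ¬ IsConstMap (B n ω)} ≤ c ^ (K + 1) := by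
      intro K
      have hcov := hcover K {ω | ∀ n, ¬ IsConstMap (B n ω)} (Absorb.TS' K) ?_
      · refine hcov.trans ?_
        calc ((Absorb.TS' (N := N) K).card : ENNReal) * q ^ (K + 1)
            ≤ (((N ^ N - N) ^ (K + 1) : ℕ) : ENNReal) * q ^ (K + 1) := by
              gcongr
              exact_mod_cast Absorb.TS'_card_le hN K
          _ = c ^ (K + 1) := by rw [hcdef, mul_pow]; push_cast; ring
      · intro ω hω
        simp only [Absorb.TS', Finset.mem_filter, Finset.mem_univ, true_and]
        intro m hm
        rw [hBK K ω m (Nat.lt_succ_iff.mp hm)]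
        exact hω m
    have htend : Filter.Tendsto (fun K : ℕ => c ^ (K + 1)) Filter.atTop (nhds 0) :=
      (ENNReal.tendsto_pow_atTop_nhds_zero_of_lt_one hc1).comp (Filter.tendsto_add_atTop_nat 1)
    have := ge_of_tendsto' htend hbound
    exact le_antisymm this zero_le
  have part1 : P {ω | ∃ n, IsConstMap (B n ω)} = 1 := by
    have hcompl : {ω | ∃ n, IsConstMap (B n ω)}ᶜ = {ω | ∀ n, ¬ IsConstMap (B n ω)} := by
      ext ω; simp
    have h1 : (1 : ENNReal) = P Set.univ := (measure_univ).symm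
    have hle : P Set.univ ≤ P {ω | ∃ n, IsConstMap (B n ω)} +
        P {ω | ∃ n, IsConstMap (B n ω)}ᶜ := by
      rw [← Set.union_compl_self {ω | ∃ n, IsConstMap (B n ω)}]
      exact measure_union_le _ _
    rw [hcompl, hnev, add_zero] at hle
    exact le_antisymm prob_le_one (h1 ▸ hle)
  refine ⟨part1, ?_⟩
  -- Part 2
  set E : Fin N → ℕ → Set Ω :=
    fun i n => {ω | (∀ m < n, ¬ IsConstMap (B m ω)) ∧ ∀ j, B n ω j = i} with hEdef
  set Es : Fin N → Set Ω :=
    fun i => {ω | ∃ n, (∀ m < n, ¬ IsConstMap (B m ω)) ∧ ∀ j, B n ω j = i} with hEsdef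
  have hEs_eq : ∀ i, Es i = ⋃ n, E i n := by
    intro i; ext ω; simp [hEsdef, hEdef]
  -- upper bound on each partial sum
  have hupper : ∀ i : Fin N, P (Es i) ≤ (N : ENNReal)⁻¹ := by
    intro i
    have hEn_le : ∀ (n K : ℕ), n ≤ K → P (E i n) ≤ ((Absorb.TS K n i).card) * q ^ (K + 1) := by
      intro n K hnK
      refine hcover K (E i n) (Absorb.TS K n i) ?_
      intro ω hω
      rw [Absorb.mem_TS]
      constructor
      · intro m hm
        rw [hBK K ω m ((le_of_lt hm).trans hnK)]
        exact hω.1 m hm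
      · intro j
        rw [hBK K ω n hnK]
        exact hω.2 j
    have hKsum : ∀ K : ℕ, ∑ n ∈ Finset.range (K + 1), P (E i n) ≤ (N : ENNReal)⁻¹ := by
      intro K
      have hstep : ∑ n ∈ Finset.range (K + 1), P (E i n)
          ≤ ∑ n ∈ Finset.range (K + 1), ((Absorb.TS K n i).card : ENNReal) * q ^ (K + 1) := by
        refine Finset.sum_le_sum (fun n hn => ?_)
        exact hEn_le n K (Nat.lt_succ_iff.mp (Finset.mem_range.mp hn))
      refine hstep.trans ?_
      rw [ENNReal.le_inv_iff_mul_le]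
      -- multiply by N on the right
      have hmul : (∑ n ∈ Finset.range (K + 1), ((Absorb.TS K n i).card : ENNReal) * q ^ (K + 1))
          * (N : ENNReal)
          = ∑ p ∈ (Finset.range (K + 1)) ×ˢ (Finset.univ : Finset (Fin N)),
              ((Absorb.TS K p.1 p.2).card : ENNReal) * q ^ (K + 1) := by
        rw [Finset.sum_mul, Finset.sum_product]
        refine Finset.sum_congr rfl (fun n hn => ?_)
        have hnK : n ≤ K := Nat.lt_succ_iff.mp (Finset.mem_range.mp hn)
        have hcards : ∀ i' : Fin N, ((Absorb.TS K n i').card : ENNReal) * q ^ (K + 1)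
            = ((Absorb.TS K n i).card : ENNReal) * q ^ (K + 1) := by
          intro i'
          rw [Absorb.TS_card_eq hN hnK i' i]
        rw [Finset.sum_congr rfl (fun i' _ => hcards i'), Finset.sum_const, Finset.card_univ,
          Fintype.card_fin, nsmul_eq_mul, mul_comm]
      rw [hmul]
      calc ∑ p ∈ (Finset.range (K + 1)) ×ˢ (Finset.univ : Finset (Fin N)),
            ((Absorb.TS K p.1 p.2).card : ENNReal) * q ^ (K + 1)
          = ((∑ p ∈ (Finset.range (K + 1)) ×ˢ (Finset.univ : Finset (Fin N)),
              (Absorb.TS K p.1 p.2).card : ℕ) : ENNReal) * q ^ (K + 1) := by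
            rw [← Finset.sum_mul]; push_cast; ring
        _ ≤ (((N ^ N) ^ (K + 1) : ℕ) : ENNReal) * q ^ (K + 1) := by
            gcongr
            exact_mod_cast Absorb.TS_card_sum_le hN K
        _ = 1 := by
            push_cast
            rw [← mul_pow, ENNReal.mul_inv_cancel hpow_ne hpow_top, one_pow]
    have : ∑' n, P (E i n) ≤ (N : ENNReal)⁻¹ := by
      rw [ENNReal.tsum_eq_iSup_sum' (fun K : ℕ => Finset.range (K + 1)) ?_]
      · exact iSup_le hKsum
      · intro t
        obtain ⟨K, hK⟩ := Finset.exists_nat_subset_range t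
        exact ⟨K, hK.trans (Finset.range_subset_range.mpr (Nat.le_succ K))⟩
    calc P (Es i) ≤ ∑' n, P (E i n) := by rw [hEs_eq i]; exact measure_iUnion_le _
      _ ≤ (N : ENNReal)⁻¹ := this
  -- lower bound via the union being everything
  have hU : {ω | ∃ n, IsConstMap (B n ω)} = ⋃ i, Es i := by
    ext ω
    simp only [Set.mem_setOf_eq, Set.mem_iUnion, hEsdef]
    constructor
    · rintro h
      have hex := h
      classical
      set n0 := Nat.find h with hn0
      obtain ⟨i, hi⟩ := Nat.find_spec h
      exact ⟨i, n0, fun m hm => Nat.find_min h hm, hi⟩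
    · rintro ⟨i, n, _, h2⟩
      exact ⟨n, i, h2⟩
  have hsum_ge : (1 : ENNReal) ≤ ∑ i : Fin N, P (Es i) := by
    calc (1 : ENNReal) = P {ω | ∃ n, IsConstMap (B n ω)} := part1.symm
      _ = P (⋃ i, Es i) := by rw [hU]
      _ ≤ ∑ i : Fin N, P (Es i) := measure_iUnion_fintype_le _ _
  intro i
  refine le_antisymm (hupper i) ?_
  have herase : ∑ i' ∈ Finset.univ.erase i, P (Es i') ≤ ((N - 1 : ℕ) : ENNReal) * (N : ENNReal)⁻¹ := by
    calc ∑ i' ∈ Finset.univ.erase i, P (Es i')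
        ≤ ∑ _i' ∈ Finset.univ.erase i, (N : ENNReal)⁻¹ :=
          Finset.sum_le_sum (fun i' _ => hupper i')
      _ = ((N - 1 : ℕ) : ENNReal) * (N : ENNReal)⁻¹ := by
          rw [Finset.sum_const, nsmul_eq_mul, Finset.card_erase_of_mem (Finset.mem_univ i),
            Finset.card_univ, Fintype.card_fin]
  have hsplit : ∑ i' : Fin N, P (Es i') = P (Es i) + ∑ i' ∈ Finset.univ.erase i, P (Es i') :=
    (Finset.add_sum_erase _ _ (Finset.mem_univ i)).symm
  have h1le : (1 : ENNReal) ≤ P (Es i) + ((N - 1 : ℕ) : ENNReal) * (N : ENNReal)⁻¹ := by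
    refine hsum_ge.trans ?_
    rw [hsplit]
    exact add_le_add_right herase _
  have hkey : (1 : ENNReal) - ((N - 1 : ℕ) : ENNReal) * (N : ENNReal)⁻¹ = (N : ENNReal)⁻¹ := by
    refine ENNReal.sub_eq_of_eq_add ?_ ?_
    · exact ENNReal.mul_ne_top (ENNReal.natCast_ne_top _) (by simp [hNcast])
    · have : ((N - 1 : ℕ) : ENNReal) + 1 = (N : ENNReal) := by
        have := Nat.succ_pred_eq_of_pos (show 0 < N by omega)
        exact_mod_cast congrArg (Nat.cast : ℕ → ENNReal) (by omega : (N - 1) + 1 = N)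
      calc (1 : ENNReal) = (N : ENNReal) * (N : ENNReal)⁻¹ :=
            (ENNReal.mul_inv_cancel hNcast hNtop).symm
        _ = (((N - 1 : ℕ) : ENNReal) + 1) * (N : ENNReal)⁻¹ := by rw [this]
        _ = (N : ENNReal)⁻¹ + ((N - 1 : ℕ) : ENNReal) * (N : ENNReal)⁻¹ := by ring
  rw [← hkey]
  exact tsub_le_iff_right.mpr h1le
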